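/- For δ ∈ (0,1) and all θ, θ̃ > 0, Λ_δ(θ, θ̃) = (1/(δ+1))·[(θ^δ - θ̃^δ)(θ - θ̃) + θ̃^δ·(θ - θ̃ - (1/δ)·θ̃^{1-δ}·(θ^δ - θ̃^δ))], and both summands on the right-hand side are nonnegative; in particular Λ_δ(θ, θ̃) ≥ 0. -/

import Mathlib

open Real

/-- For `δ ∈ (0,1)` and `θ, θ̃ > 0`, with `f_δ θ = -θ^(δ+1)/(δ(δ+1))` and
`f_δ' θ = -θ^δ/δ`, the Bregman quantity
`Λ_δ(θ | θ̃) = f_δ θ - f_δ θ̃ - f_δ'(θ)(θ - θ̃)` satisfies the identity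
`Λ_δ = (1/(δ+1)) [(θ^δ - θ̃^δ)(θ - θ̃) + θ̃^δ (θ - θ̃ - (1/δ) θ̃^(1-δ) (θ^δ - θ̃^δ))]`,
both summands are nonnegative, and in particular `Λ_δ ≥ 0`. -/
theorem stmt2 (δ : ℝ) (hδ : δ ∈ Set.Ioo (0 : ℝ) 1)
    (f : ℝ → ℝ) (hf : f = fun θ : ℝ => -θ ^ (δ + 1) / (δ * (δ + 1)))
    (f' : ℝ → ℝ) (hf' : f' = fun θ : ℝ => -θ ^ δ / δ)
    (Λ : ℝ → ℝ → ℝ) (hΛ : Λ = fun θ θt => f θ - f θt - f' θ * (θ - θt)) :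
    ∀ θ θt : ℝ, 0 < θ → 0 < θt →
      (Λ θ θt = (1 / (δ + 1)) *
          ((θ ^ δ - θt ^ δ) * (θ - θt)
            + θt ^ δ * (θ - θt - (1 / δ) * θt ^ (1 - δ) * (θ ^ δ - θt ^ δ)))) ∧
      0 ≤ (θ ^ δ - θt ^ δ) * (θ - θt) ∧
      0 ≤ θt ^ δ * (θ - θt - (1 / δ) * θt ^ (1 - δ) * (θ ^ δ - θt ^ δ)) ∧
      0 ≤ Λ θ θt := by
  obtain ⟨hδ0, hδ1⟩ := hδ
  intro θ θt hθ hθt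
  have hδ0' : δ ≠ 0 := ne_of_gt hδ0
  have hδ1' : δ + 1 ≠ 0 := by linarith
  -- key rpow identities
  have h1 : θ ^ (δ + 1) = θ ^ δ * θ := by
    rw [rpow_add hθ, rpow_one]
  have h2 : θt ^ (δ + 1) = θt ^ δ * θt := by
    rw [rpow_add hθt, rpow_one]
  have h3 : θt ^ δ * θt ^ (1 - δ) = θt := by
    rw [← rpow_add hθt]; norm_num
  -- first summand nonneg
  have hmono : ∀ a b : ℝ, 0 < a → 0 < b → a ≤ b → a ^ δ ≤ b ^ δ := fun a b ha hb hab =>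
    rpow_le_rpow ha.le hab hδ0.le
  have hfst : 0 ≤ (θ ^ δ - θt ^ δ) * (θ - θt) := by
    rcases le_total θ θt with h | h
    · have := hmono θ θt hθ hθt h
      nlinarith
    · have := hmono θt θ hθt hθ h
      nlinarith
  -- Bernoulli: (θ/θt)^δ ≤ 1 + δ (θ/θt - 1)
  have hb : (θ / θt) ^ δ ≤ 1 + δ * (θ / θt - 1) := by
    have := rpow_one_add_le_one_add_mul_self (s := θ / θt - 1)
      (by have : 0 < θ / θt := div_pos hθ hθt; linarith) hδ0.le hδ1.le
    simpa using this
  have hdiv : (θ / θt) ^ δ = θ ^ δ / θt ^ δ := div_rpow hθ.le hθt.le δ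
  have hθtδpos : (0:ℝ) < θt ^ δ := rpow_pos_of_pos hθt δ
  have hθt1δpos : (0:ℝ) < θt ^ (1 - δ) := rpow_pos_of_pos hθt (1 - δ)
  -- key inequality: θt^(1-δ) * (θ^δ - θt^δ) ≤ δ * (θ - θt)
  have hθtne : θt ≠ 0 := ne_of_gt hθt
  have hrew : θt ^ (1 - δ) * (θ ^ δ - θt ^ δ) = θt * ((θ / θt) ^ δ - 1) := by
    have h4 : θt ^ (1 - δ) = θt / θt ^ δ := by
      rw [eq_div_iff hθtδpos.ne']; linarith [h3]
    rw [hdiv, h4]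
    field_simp
  have hkey : θt ^ (1 - δ) * (θ ^ δ - θt ^ δ) ≤ δ * (θ - θt) := by
    rw [hrew]
    have := mul_le_mul_of_nonneg_left (sub_le_sub_right hb 1) hθt.le
    calc θt * ((θ / θt) ^ δ - 1) ≤ θt * (1 + δ * (θ / θt - 1) - 1) := this
      _ = δ * (θ - θt) := by field_simp; ring
  -- second summand nonneg
  have hsnd : 0 ≤ θt ^ δ * (θ - θt - (1 / δ) * θt ^ (1 - δ) * (θ ^ δ - θt ^ δ)) := by
    apply mul_nonneg hθtδpos.le
    have : (1 / δ) * θt ^ (1 - δ) * (θ ^ δ - θt ^ δ) ≤ θ - θt := by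
      rw [div_mul_eq_mul_div, div_mul_eq_mul_div, one_mul, div_le_iff₀ hδ0]
      nlinarith [hkey]
    linarith
  -- identity
  have hid : Λ θ θt = (1 / (δ + 1)) *
      ((θ ^ δ - θt ^ δ) * (θ - θt)
        + θt ^ δ * (θ - θt - (1 / δ) * θt ^ (1 - δ) * (θ ^ δ - θt ^ δ))) := by
    have h5 : θt ^ δ * (θ - θt - 1 / δ * θt ^ (1 - δ) * (θ ^ δ - θt ^ δ))
        = θt ^ δ * (θ - θt) - 1 / δ * θt * (θ ^ δ - θt ^ δ) := by
      linear_combination (-(1 / δ) * (θ ^ δ - θt ^ δ)) * h3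
    subst hf hf' hΛ
    simp only
    rw [h1, h2, h5]
    field_simp
    ring
  refine ⟨hid, hfst, hsnd, ?_⟩
  rw [hid]
  have : (0:ℝ) < 1 / (δ + 1) := by positivity
  positivity
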